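/- A matrix A ∈ GL₂(ℤ) with A² = I and det A = −1 is conjugate in GL₂(ℤ) to S = [[1,0],[0,−1]] if and only if both off-diagonal entries a₁₂ and a₂₁ are even. -/

import Mathlib

open Matrix

/-- A matrix `A ∈ GL₂(ℤ)` with `A² = I` and `det A = -1` is conjugate in `GL₂(ℤ)` to
`S = [[1,0],[0,-1]]` if and only if both off-diagonal entries are even. -/
theorem gl2_conjugate_to_S_iff (A : Matrix (Fin 2) (Fin 2) ℤ)
    (hA : A * A = 1) (hdet : A.det = -1) :
    (∃ P : Matrix (Fin 2) (Fin 2) ℤ, IsUnit P.det ∧ P⁻¹ * A * P = !![1, 0; 0, -1]) ↔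
      (Even (A 0 1) ∧ Even (A 1 0)) := by
  constructor
  · rintro ⟨P, hP, hconj⟩
    have h1 : P⁻¹ * P = 1 := Matrix.nonsing_inv_mul P hP
    have h2 : P * P⁻¹ = 1 := Matrix.mul_nonsing_inv P hP
    have hA' : A = P * !![1, 0; 0, -1] * P⁻¹ := by
      calc A = (P * P⁻¹) * A * (P * P⁻¹) := by rw [h2, one_mul, mul_one]
        _ = P * (P⁻¹ * A * P) * P⁻¹ := by simp only [mul_assoc]
        _ = P * !![1, 0; 0, -1] * P⁻¹ := by rw [hconj]
    set f : Matrix (Fin 2) (Fin 2) ℤ →+* Matrix (Fin 2) (Fin 2) (ZMod 2) :=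
      (Int.castRingHom (ZMod 2)).mapMatrix with hf
    have hS : f !![(1 : ℤ), 0; 0, -1] = 1 := by
      ext i j
      fin_cases i <;> fin_cases j <;>
        simp [RingHom.mapMatrix_apply, Matrix.map_apply, Matrix.one_apply] <;> decide
    have hfA : f A = 1 := by
      rw [hA', _root_.map_mul, _root_.map_mul, hS, mul_one, ← _root_.map_mul, h2, _root_.map_one]
    have key : ∀ i j : Fin 2, i ≠ j → ((A i j : ZMod 2)) = 0 := by
      intro i j hij
      have := congrFun (congrFun hfA i) j
      simpa [hf, RingHom.mapMatrix_apply, Matrix.map_apply, Matrix.one_apply, hij] using this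
    constructor
    · have h01 := key 0 1 (by decide)
      have := (ZMod.intCast_zmod_eq_zero_iff_dvd _ 2).mp h01
      rw [even_iff_two_dvd]
      exact_mod_cast this
    · have h10 := key 1 0 (by decide)
      have := (ZMod.intCast_zmod_eq_zero_iff_dvd _ 2).mp h10
      rw [even_iff_two_dvd]
      exact_mod_cast this
  · rintro ⟨⟨b', hb⟩, ⟨c', hc⟩⟩
    set a := A 0 0 with ha'
    set b := A 0 1 with hb'
    set c := A 1 0 with hc'
    set d := A 1 1 with hd'
    have hAeq : A = !![a, b; c, d] := by
      ext i j; fin_cases i <;> fin_cases j <;> rfl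
    have h00 : a * a + b * c = 1 := by
      have := congrFun (congrFun hA 0) 0
      simpa [Matrix.mul_apply, Fin.sum_univ_two, Matrix.one_apply] using this
    have h11 : c * b + d * d = 1 := by
      have := congrFun (congrFun hA 1) 1
      simpa [Matrix.mul_apply, Fin.sum_univ_two, Matrix.one_apply] using this
    have hdet2 : a * d - b * c = -1 := by
      have := hdet
      rw [Matrix.det_fin_two] at this
      linarith [this]
    have htr : d = -a := by
      have hsq : (a + d) * (a + d) = 0 := by linear_combination h00 + h11 + 2 * hdet2
      have := mul_self_eq_zero.mp hsq
      linarith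
    -- a is odd
    have hodd : Odd a := by
      rcases Int.even_or_odd a with he | ho
      · exfalso
        have hbe : Even b := ⟨b', hb⟩
        have h1 : Even (a * a + b * c) := (he.mul_right a).add (hbe.mul_right c)
        rw [h00] at h1
        norm_num at h1
      · exact ho
    obtain ⟨m, hm⟩ := hodd
    have h4 : 4 * (b' * c') + 4 * (m * m) + 4 * m = 0 := by
      linear_combination h00 - (a + 2 * m + 1) * hm - c * hb - 2 * b' * hc
    have hbc : b' * c' + m * m + m = 0 := by linarith
    by_cases hz : m + 1 = 0 ∧ c' = 0
    · -- special case: a = -1, c = 0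
      have f3 : a = -1 := by linear_combination hm + 2 * hz.1
      have f4 : c = 0 := by linear_combination hc + 2 * hz.2
      have f1 : a * b' + b * 1 = b' := by linear_combination b' * f3 + hb
      have f2 : c * b' + d * 1 = 1 := by linear_combination b' * f4 + htr - f3
      have f3' : a * 1 + b * 0 = -1 := by linear_combination f3
      have f4' : c * 1 + d * 0 = 0 := by linear_combination f4
      refine ⟨!![b', 1; 1, 0], ?_, ?_⟩
      · have : (!![b', 1; 1, 0] : Matrix (Fin 2) (Fin 2) ℤ).det = -1 := by
          simp [Matrix.det_fin_two_of]
        rw [this]; exact isUnit_one.neg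
      · have hPu : IsUnit (!![b', 1; 1, 0] : Matrix (Fin 2) (Fin 2) ℤ).det := by
          have : (!![b', 1; 1, 0] : Matrix (Fin 2) (Fin 2) ℤ).det = -1 := by
            simp [Matrix.det_fin_two_of]
          rw [this]; exact isUnit_one.neg
        have hAP : A * !![b', 1; 1, 0] = !![b', 1; 1, 0] * !![1, 0; 0, -1] := by
          rw [hAeq]
          ext i j
          fin_cases i <;> fin_cases j <;>
            simp [Matrix.mul_apply, Fin.sum_univ_two] <;>
            first
              | linear_combination f1
              | linear_combination f2
              | linear_combination f3'
              | linear_combination f4'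
        calc (!![b', 1; 1, 0] : Matrix (Fin 2) (Fin 2) ℤ)⁻¹ * A * !![b', 1; 1, 0]
            = !![b', 1; 1, 0]⁻¹ * (A * !![b', 1; 1, 0]) := by rw [mul_assoc]
          _ = !![b', 1; 1, 0]⁻¹ * (!![b', 1; 1, 0] * !![1, 0; 0, -1]) := by rw [hAP]
          _ = (!![b', 1; 1, 0]⁻¹ * !![b', 1; 1, 0]) * !![1, 0; 0, -1] := by rw [mul_assoc]
          _ = !![1, 0; 0, -1] := by rw [Matrix.nonsing_inv_mul _ hPu, one_mul]
    · -- main case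
      set g : ℕ := Int.gcd (m + 1) c' with hg
      have hgne : g ≠ 0 := by
        intro h
        rcases Int.gcd_eq_zero_iff.mp h with ⟨h1, h2⟩
        exact hz ⟨h1, h2⟩
      have hgpos : 0 < g := Nat.pos_of_ne_zero hgne
      have hgZ : (g : ℤ) ≠ 0 := Int.natCast_ne_zero.mpr hgne
      set p : ℤ := (m + 1) / g with hp'
      set q : ℤ := c' / g with hq'
      have hgp : m + 1 = g * p := (Int.mul_ediv_cancel' (Int.gcd_dvd_left _ _)).symm
      have hgq : c' = g * q := (Int.mul_ediv_cancel' (Int.gcd_dvd_right _ _)).symm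
      have hcop : IsCoprime p q := by
        rw [Int.isCoprime_iff_gcd_eq_one]
        exact Int.gcd_div_gcd_div_gcd hgpos
      obtain ⟨r, s, hrs⟩ := hcop
      have hbq : b' * q = -(m * p) := by
        apply mul_left_cancel₀ hgZ
        linear_combination hbc - b' * hgq - m * hgp
      set x : ℤ := m * s - b' * r with hx'
      set y : ℤ := c' * s + (m + 1) * r with hy'
      have hdP : (!![p, x; q, y] : Matrix (Fin 2) (Fin 2) ℤ).det = 1 := by
        rw [Matrix.det_fin_two_of, hx', hy']
        linear_combination p * s * hgq + r * hbq - s * q * hgp + hrs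
      have hPu : IsUnit (!![p, x; q, y] : Matrix (Fin 2) (Fin 2) ℤ).det := by
        rw [hdP]; exact isUnit_one
      refine ⟨!![p, x; q, y], hPu, ?_⟩
      have e1 : a * p + b * q = p := by
        linear_combination p * hm + q * hb + 2 * hbq
      have e2 : c * p + d * q = q := by
        linear_combination p * hc + q * htr - q * hm + 2 * p * hgq - 2 * q * hgp
      have e3 : a * x + b * y = -x := by
        rw [hx', hy']
        linear_combination (m * s - b' * r) * hm + (c' * s + (m + 1) * r) * hb + 2 * s * hbc
      have e4 : c * x + d * y = -y := by
        rw [hx', hy']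
        linear_combination (m * s - b' * r) * hc + (c' * s + (m + 1) * r) * htr -
          (c' * s + (m + 1) * r) * hm - 2 * r * hbc
      have hAP : A * !![p, x; q, y] = !![p, x; q, y] * !![1, 0; 0, -1] := by
        rw [hAeq]
        ext i j
        fin_cases i <;> fin_cases j <;>
          simp [Matrix.mul_apply, Fin.sum_univ_two] <;>
          first
            | linear_combination e1
            | linear_combination e2
            | linear_combination e3
            | linear_combination e4
      calc (!![p, x; q, y] : Matrix (Fin 2) (Fin 2) ℤ)⁻¹ * A * !![p, x; q, y]
          = !![p, x; q, y]⁻¹ * (A * !![p, x; q, y]) := by rw [mul_assoc]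
        _ = !![p, x; q, y]⁻¹ * (!![p, x; q, y] * !![1, 0; 0, -1]) := by rw [hAP]
        _ = (!![p, x; q, y]⁻¹ * !![p, x; q, y]) * !![1, 0; 0, -1] := by rw [mul_assoc]
        _ = !![1, 0; 0, -1] := by rw [Matrix.nonsing_inv_mul _ hPu, one_mul]
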